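/- arXiv:2303.13298 — 2 statements merged into one kernel-verified Lean document; each statement's English description precedes it below -/
import Mathlib

section
/- Let M_ψ be a Lorentz ideal of B(H) and let τ_ψ be a ‖·‖_{M_ψ}-bounded singular trace on M_ψ. Suppose that for some 0 < ε < 1 there exists a constant C > 0 such that ψ(t) ≤ C·t^ε for all t ≥ 1. Then for every α > 1/(1−ε), every operator A in the root ideal M_ψ^α = {A ∈ B(H) : |A|^{1/α} ∈ M_ψ} satisfies the singular value estimate s(n,A) ≤ const·(1+n)^{−α(1−ε)} for all n ≥ 0 (with a constant independent of n), hence A is trace class, and consequently τ_ψ(A) = 0 for every A ∈ M_ψ^α, i.e. τ_ψ(M_ψ^α) = {0}. -/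
/- STATEMENT 0: For a Lorentz ideal `M_ψ` with a bounded singular trace `τ_ψ`, if
`ψ(t) ≤ C t^ε` (t ≥ 1) for some `0 < ε < 1`, then for every `α > 1/(1-ε)` every `A` in the
root ideal `M_ψ^α` satisfies `s(n,A) ≤ c (1+n)^{-α(1-ε)}`, is trace class, and `τ_ψ(A) = 0`.

Encoding notes: the Hilbert space is an arbitrary complex Hilbert space; singular values are
defined as approximation numbers; membership of `|A|^{1/α}` in `M_ψ` is encoded via the
identity `s(k,|A|^{1/α}) = s(k,A)^{1/α}`; the trace is encoded as a globally defined linear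
functional whose restriction to `M_ψ` has the trace/boundedness/singularity properties;
"trace class" is encoded as summability of the singular values. -/

open MeasureTheory Complex Real Filter Topology

noncomputable section

variable {H : Type*} [NormedAddCommGroup H] [InnerProductSpace ℂ H] [CompleteSpace H]

/-- The `k`-th singular value (approximation number) of a bounded operator. -/
def singVal (A : H →L[ℂ] H) (k : ℕ) : ℝ :=
  sInf {r : ℝ | ∃ F : H →L[ℂ] H, FiniteDimensional ℂ (LinearMap.range (F : H →ₗ[ℂ] H)) ∧
    Module.finrank ℂ (LinearMap.range (F : H →ₗ[ℂ] H)) ≤ k ∧ r = ‖A - F‖}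

/-- Membership in the Lorentz ideal `M_ψ`:
`sup_n (1/ψ(1+n)) Σ_{k=0}^n s(k,A) < ∞`. -/
def MemLorentz (ψ : ℝ → ℝ) (A : H →L[ℂ] H) : Prop :=
  ∃ M : ℝ, ∀ n : ℕ, (∑ k ∈ Finset.range (n + 1), singVal A k) ≤ M * ψ ((n : ℝ) + 1)

/-- The Lorentz ideal norm `‖A‖_{M_ψ} = sup_n (1/ψ(1+n)) Σ_{k=0}^n s(k,A)`. -/
def lorentzNrm (ψ : ℝ → ℝ) (A : H →L[ℂ] H) : ℝ :=
  ⨆ n : ℕ, (∑ k ∈ Finset.range (n + 1), singVal A k) / ψ ((n : ℝ) + 1)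

set_option linter.unusedSectionVars false

lemma range_zero_clm :
    LinearMap.range ((0 : H →L[ℂ] H) : H →ₗ[ℂ] H) = (⊥ : Submodule ℂ H) := by
  ext x; simp

lemma fd_zero_clm : FiniteDimensional ℂ (LinearMap.range ((0 : H →L[ℂ] H) : H →ₗ[ℂ] H)) := by
  rw [range_zero_clm]; infer_instance

lemma finrank_zero_clm (k : ℕ) :
    Module.finrank ℂ (LinearMap.range ((0 : H →L[ℂ] H) : H →ₗ[ℂ] H)) ≤ k := by
  rw [range_zero_clm]; simp

lemma singValSet_nonempty (A : H →L[ℂ] H) (k : ℕ) :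
    {r : ℝ | ∃ F : H →L[ℂ] H, FiniteDimensional ℂ (LinearMap.range (F : H →ₗ[ℂ] H)) ∧
      Module.finrank ℂ (LinearMap.range (F : H →ₗ[ℂ] H)) ≤ k ∧ r = ‖A - F‖}.Nonempty := by
  exact ⟨‖A - 0‖, 0, fd_zero_clm, finrank_zero_clm k, rfl⟩

lemma singValSet_bddBelow (A : H →L[ℂ] H) (k : ℕ) :
    BddBelow {r : ℝ | ∃ F : H →L[ℂ] H, FiniteDimensional ℂ (LinearMap.range (F : H →ₗ[ℂ] H)) ∧
      Module.finrank ℂ (LinearMap.range (F : H →ₗ[ℂ] H)) ≤ k ∧ r = ‖A - F‖} := by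
  refine ⟨0, ?_⟩
  rintro r ⟨F, -, -, rfl⟩
  exact norm_nonneg _

lemma singVal_nonneg (A : H →L[ℂ] H) (k : ℕ) : 0 ≤ singVal A k := by
  apply Real.sInf_nonneg
  rintro r ⟨F, -, -, rfl⟩
  exact norm_nonneg _

lemma singVal_le (A F : H →L[ℂ] H) (k : ℕ)
    (h1 : FiniteDimensional ℂ (LinearMap.range (F : H →ₗ[ℂ] H)))
    (h2 : Module.finrank ℂ (LinearMap.range (F : H →ₗ[ℂ] H)) ≤ k) :
    singVal A k ≤ ‖A - F‖ :=
  csInf_le (singValSet_bddBelow A k) ⟨F, h1, h2, rfl⟩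

lemma singVal_antitone (A : H →L[ℂ] H) {k l : ℕ} (hkl : k ≤ l) :
    singVal A l ≤ singVal A k := by
  apply csInf_le_csInf (singValSet_bddBelow A l) (singValSet_nonempty A k)
  rintro r ⟨F, h1, h2, rfl⟩
  exact ⟨F, h1, h2.trans hkl, rfl⟩

lemma singVal_le_norm (A : H →L[ℂ] H) (k : ℕ) : singVal A k ≤ ‖A‖ := by
  have := singVal_le A 0 k fd_zero_clm (finrank_zero_clm k)
  simpa using this

lemma exists_approx (A : H →L[ℂ] H) (m : ℕ) {δ : ℝ} (hδ : 0 < δ) :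
    ∃ F : H →L[ℂ] H, FiniteDimensional ℂ (LinearMap.range (F : H →ₗ[ℂ] H)) ∧
      Module.finrank ℂ (LinearMap.range (F : H →ₗ[ℂ] H)) ≤ m ∧ ‖A - F‖ ≤ singVal A m + δ := by
  have h : singVal A m < singVal A m + δ := lt_add_of_pos_right _ hδ
  obtain ⟨r, ⟨F, h1, h2, rfl⟩, hr⟩ := exists_lt_of_csInf_lt (singValSet_nonempty A m) h
  exact ⟨F, h1, h2, hr.le⟩

lemma singVal_sub_le (A F : H →L[ℂ] H) (m k : ℕ)
    (hF : FiniteDimensional ℂ (LinearMap.range (F : H →ₗ[ℂ] H)))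
    (hFr : Module.finrank ℂ (LinearMap.range (F : H →ₗ[ℂ] H)) ≤ m) (hk : m ≤ k) :
    singVal (A - F) k ≤ singVal A (k - m) := by
  apply le_csInf (singValSet_nonempty A (k - m))
  rintro r ⟨G, hG, hGr, rfl⟩
  haveI := hF; haveI := hG
  have hle : LinearMap.range ((G - F : H →L[ℂ] H) : H →ₗ[ℂ] H) ≤
      LinearMap.range (G : H →ₗ[ℂ] H) ⊔ LinearMap.range (F : H →ₗ[ℂ] H) := by
    rintro x ⟨y, rfl⟩
    have : ((G - F : H →L[ℂ] H) : H →ₗ[ℂ] H) y = G y - F y := by simp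
    rw [this]
    exact Submodule.sub_mem _ (Submodule.mem_sup_left ⟨y, rfl⟩)
      (Submodule.mem_sup_right ⟨y, rfl⟩)
  haveI : FiniteDimensional ℂ
      ((LinearMap.range (G : H →ₗ[ℂ] H) ⊔ LinearMap.range (F : H →ₗ[ℂ] H) : Submodule ℂ H)) :=
    Submodule.finiteDimensional_sup _ _
  haveI : FiniteDimensional ℂ (LinearMap.range ((G - F : H →L[ℂ] H) : H →ₗ[ℂ] H)) :=
    Submodule.finiteDimensional_of_le hle
  have hrank : Module.finrank ℂ (LinearMap.range ((G - F : H →L[ℂ] H) : H →ₗ[ℂ] H)) ≤ k := by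
    calc Module.finrank ℂ (LinearMap.range ((G - F : H →L[ℂ] H) : H →ₗ[ℂ] H))
        ≤ Module.finrank ℂ
          ((LinearMap.range (G : H →ₗ[ℂ] H) ⊔ LinearMap.range (F : H →ₗ[ℂ] H) : Submodule ℂ H)) :=
          Submodule.finrank_mono hle
      _ ≤ Module.finrank ℂ (LinearMap.range (G : H →ₗ[ℂ] H)) +
          Module.finrank ℂ (LinearMap.range (F : H →ₗ[ℂ] H)) :=
          Submodule.finrank_add_le_finrank_add_finrank _ _
      _ ≤ (k - m) + m := Nat.add_le_add hGr hFr
      _ ≤ k := by omega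
  have := singVal_le (A - F) (G - F) k inferInstance hrank
  have heq : (A - F) - (G - F) = A - G := by abel
  rwa [heq] at this


set_option maxHeartbeats 2000000 in
theorem lorentz_root_ideal_singular_trace_vanishes
    (ψ : ℝ → ℝ)
    (hψconc : ConcaveOn ℝ (Set.Ioi 0) ψ)
    (hψpos : ∀ t : ℝ, 0 < t → 0 < ψ t)
    (hψtop : Tendsto ψ atTop atTop)
    (ε C : ℝ) (hε0 : 0 < ε) (hε1 : ε < 1) (hC : 0 < C)
    (hgrow : ∀ t : ℝ, 1 ≤ t → ψ t ≤ C * t ^ ε)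
    -- a ‖·‖_{M_ψ}-bounded singular trace on `M_ψ`
    (τ : (H →L[ℂ] H) →ₗ[ℂ] ℂ)
    (hcyc : ∀ A B : H →L[ℂ] H, MemLorentz ψ A → τ (A * B) = τ (B * A))
    (hsing : ∀ A : H →L[ℂ] H,
      FiniteDimensional ℂ (LinearMap.range (A : H →ₗ[ℂ] H)) → τ A = 0)
    (M : ℝ) (hbdd : ∀ A : H →L[ℂ] H, MemLorentz ψ A → ‖τ A‖ ≤ M * lorentzNrm ψ A)
    -- the exponent and an element of the root ideal `M_ψ^α`, i.e. `|A|^{1/α} ∈ M_ψ`,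
    -- encoded via `s(k, |A|^{1/α}) = s(k,A)^{1/α}`
    (α : ℝ) (hα : 1 / (1 - ε) < α)
    (A : H →L[ℂ] H)
    (hA : ∃ M' : ℝ, ∀ n : ℕ,
      (∑ k ∈ Finset.range (n + 1), (singVal A k) ^ (1 / α)) ≤ M' * ψ ((n : ℝ) + 1)) :
    (∃ c : ℝ, ∀ n : ℕ, singVal A n ≤ c * ((1 : ℝ) + n) ^ (-(α * (1 - ε)))) ∧
    Summable (fun k => singVal A k) ∧ τ A = 0 := by
  classical
  obtain ⟨M', hM'⟩ := hA
  have hε' : (0 : ℝ) < 1 - ε := by linarith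
  have hαpos : 0 < α := lt_trans (by positivity) hα
  set p := α * (1 - ε) with hp
  have hp1 : 1 < p := by
    have := (div_lt_iff₀ hε').mp hα
    nlinarith
  have hψ1 : 0 < ψ 1 := hψpos 1 one_pos
  -- ψ is bounded below by ψ 1 on [1, ∞)
  have hψmono : ∀ t : ℝ, 1 ≤ t → ψ 1 ≤ ψ t := by
    intro t ht
    rcases eq_or_lt_of_le ht with h | h
    · rw [← h]
    obtain ⟨b, hb1, hb2⟩ := ((hψtop.eventually_ge_atTop (ψ 1)).and
      (eventually_ge_atTop (t + 1))).exists
    have hbt : t < b := by linarith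
    have hb0 : (1 : ℝ) < b := by linarith
    set lam := (b - t) / (b - 1) with hlam
    set mu := (t - 1) / (b - 1) with hmu
    have hlam0 : 0 ≤ lam := by apply div_nonneg <;> linarith
    have hmu0 : 0 ≤ mu := by apply div_nonneg <;> linarith
    have hsum : lam + mu = 1 := by
      rw [hlam, hmu, ← add_div, div_eq_one_iff_eq] <;> linarith
    have hcomb : lam • (1 : ℝ) + mu • b = t := by
      have hb1' : b - 1 ≠ 0 := by linarith
      rw [smul_eq_mul, smul_eq_mul, hlam, hmu, mul_one, div_mul_eq_mul_div,
        ← add_div, div_eq_iff hb1']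
      ring
    have := hψconc.2 (Set.mem_Ioi.mpr one_pos) (Set.mem_Ioi.mpr (by linarith : (0:ℝ) < b))
      hlam0 hmu0 hsum
    rw [hcomb] at this
    have h1 : lam • ψ 1 + mu • ψ 1 ≤ lam • ψ 1 + mu • ψ b := by
      simp only [smul_eq_mul]
      nlinarith [hb1]
    calc ψ 1 = lam • ψ 1 + mu • ψ 1 := by simp [smul_eq_mul]; nlinarith [hsum]
      _ ≤ lam • ψ 1 + mu • ψ b := h1
      _ ≤ ψ t := this
  have hM'0 : 0 ≤ M' := by
    have h0 := hM' 0
    simp only [Nat.cast_zero, zero_add] at h0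
    have hge : (0 : ℝ) ≤ ∑ k ∈ Finset.range (0 + 1), (singVal A k) ^ (1 / α) :=
      Finset.sum_nonneg fun k _ => Real.rpow_nonneg (singVal_nonneg A k) _
    nlinarith [hψ1, le_trans hge h0]
  set c := (M' * C) ^ α with hc
  have hc0 : 0 ≤ c := Real.rpow_nonneg (by positivity) _
  -- pointwise singular value bound
  have hpt : ∀ n : ℕ, singVal A n ≤ c * ((1 : ℝ) + n) ^ (-p) := by
    intro n
    set s := singVal A
    have hn1 : (0 : ℝ) < (n : ℝ) + 1 := by positivity
    have hn1' : (1 : ℝ) ≤ (n : ℝ) + 1 := by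
      have : (0:ℝ) ≤ (n:ℝ) := Nat.cast_nonneg n
      linarith
    have h1 : ((n : ℝ) + 1) * s n ^ (1 / α) ≤
        ∑ k ∈ Finset.range (n + 1), s k ^ (1 / α) := by
      have hterm : ∀ k ∈ Finset.range (n + 1), s n ^ (1 / α) ≤ s k ^ (1 / α) := by
        intro k hk
        exact Real.rpow_le_rpow (singVal_nonneg A n)
          (singVal_antitone A (Nat.le_of_lt_succ (Finset.mem_range.mp hk)))
          (by positivity)
      have := Finset.card_nsmul_le_sum (Finset.range (n + 1)) _ _ hterm
      rw [Finset.card_range, nsmul_eq_mul] at this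
      push_cast at this ⊢
      linarith
    have h2 : ((n : ℝ) + 1) * s n ^ (1 / α) ≤ M' * C * ((n : ℝ) + 1) ^ ε := by
      calc ((n : ℝ) + 1) * s n ^ (1 / α) ≤ M' * ψ ((n : ℝ) + 1) := h1.trans (hM' n)
        _ ≤ M' * (C * ((n : ℝ) + 1) ^ ε) :=
            mul_le_mul_of_nonneg_left (hgrow _ hn1') hM'0
        _ = M' * C * ((n : ℝ) + 1) ^ ε := by ring
    have h3 : s n ^ (1 / α) ≤ M' * C * ((n : ℝ) + 1) ^ (ε - 1) := by
      have key : M' * C * ((n : ℝ) + 1) ^ (ε - 1) =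
          M' * C * ((n : ℝ) + 1) ^ ε / ((n : ℝ) + 1) := by
        rw [Real.rpow_sub hn1, Real.rpow_one]
        ring
      rw [key, le_div_iff₀ hn1]
      linarith
    have h4 : s n = (s n ^ (1 / α)) ^ α := by
      rw [← Real.rpow_mul (singVal_nonneg A n), one_div_mul_cancel (ne_of_gt hαpos),
        Real.rpow_one]
    calc s n = (s n ^ (1 / α)) ^ α := h4
      _ ≤ (M' * C * ((n : ℝ) + 1) ^ (ε - 1)) ^ α :=
          Real.rpow_le_rpow (Real.rpow_nonneg (singVal_nonneg A n) _) h3 hαpos.le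
      _ = (M' * C) ^ α * (((n : ℝ) + 1) ^ (ε - 1)) ^ α :=
          Real.mul_rpow (by positivity) (Real.rpow_nonneg hn1.le _)
      _ = c * ((n : ℝ) + 1) ^ ((ε - 1) * α) := by rw [← Real.rpow_mul hn1.le]
      _ = c * ((1 : ℝ) + n) ^ (-p) := by
          rw [show (ε - 1) * α = -p by rw [hp]; ring,
            show ((n : ℝ) + 1) = ((1 : ℝ) + n) by ring]
  -- summability
  have hsummand : Summable (fun n : ℕ => c * ((1 : ℝ) + n) ^ (-p)) := by
    have hbase : Summable (fun n : ℕ => (n : ℝ) ^ (-p)) :=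
      Real.summable_nat_rpow.mpr (by linarith)
    have hshift : Summable (fun n : ℕ => ((n + 1 : ℕ) : ℝ) ^ (-p)) :=
      (summable_nat_add_iff 1).mpr hbase
    have : Summable (fun n : ℕ => ((1 : ℝ) + n) ^ (-p)) := by
      refine hshift.congr fun n => ?_
      push_cast
      ring_nf
    exact this.mul_left c
  have hsum : Summable (fun k => singVal A k) :=
    Summable.of_nonneg_of_le (fun n => singVal_nonneg A n) hpt hsummand
  refine ⟨⟨c, hpt⟩, hsum, ?_⟩
  -- the trace vanishes
  set s := singVal A with hs
  set T := ∑' k, s k with hT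
  set Kx := max M 0 with hKx
  have hKx0 : 0 ≤ Kx := le_max_right _ _
  -- key bound for each m
  have key : ∀ m : ℕ, ‖τ A‖ ≤ Kx * ((2 * m * ((c + 1) * ((1 : ℝ) + m) ^ (-p)) +
      (T - ∑ i ∈ Finset.range m, s i)) / ψ 1) := by
    intro m
    have hδpos : (0 : ℝ) < ((1 : ℝ) + m) ^ (-p) := Real.rpow_pos_of_pos (by positivity) _
    set δ := ((1 : ℝ) + m) ^ (-p) with hδ
    obtain ⟨F, hF, hFr, hFnorm⟩ := exists_approx A m hδpos
    set B := A - F with hB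
    have hfs : Summable (fun j : ℕ => s (j + m)) := (summable_nat_add_iff m).mpr hsum
    set tailm := ∑' j : ℕ, s (j + m) with htailm
    have htail0 : 0 ≤ tailm := tsum_nonneg fun j => singVal_nonneg A _
    have hsmδ0 : 0 ≤ s m + δ := add_nonneg (singVal_nonneg A m) hδpos.le
    -- partial sum estimate for B
    have hpart : ∀ n : ℕ, (∑ k ∈ Finset.range (n + 1), singVal B k) ≤
        2 * m * (s m + δ) + tailm := by
      intro n
      rw [← Finset.sum_filter_add_sum_filter_not (Finset.range (n + 1)) (fun k => k < 2 * m)]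
      have hb1 : (∑ k ∈ (Finset.range (n + 1)).filter (fun k => k < 2 * m), singVal B k) ≤
          2 * m * (s m + δ) := by
        have hcard : ((Finset.range (n + 1)).filter (fun k => k < 2 * m)).card ≤ 2 * m := by
          calc ((Finset.range (n + 1)).filter (fun k => k < 2 * m)).card
              ≤ (Finset.range (2 * m)).card := by
                apply Finset.card_le_card
                intro x hx
                simp only [Finset.mem_filter, Finset.mem_range] at hx ⊢
                exact hx.2
            _ = 2 * m := Finset.card_range _
        have hterm : ∀ k ∈ (Finset.range (n + 1)).filter (fun k => k < 2 * m),
            singVal B k ≤ s m + δ := fun k _ => (singVal_le_norm B k).trans hFnorm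
        calc (∑ k ∈ (Finset.range (n + 1)).filter (fun k => k < 2 * m), singVal B k)
            ≤ ((Finset.range (n + 1)).filter (fun k => k < 2 * m)).card • (s m + δ) :=
              Finset.sum_le_card_nsmul _ _ _ hterm
          _ = ((Finset.range (n + 1)).filter (fun k => k < 2 * m)).card * (s m + δ) := by
              rw [nsmul_eq_mul]
          _ ≤ (2 * m : ℕ) * (s m + δ) := by
              apply mul_le_mul_of_nonneg_right _ hsmδ0
              exact_mod_cast hcard
          _ = 2 * m * (s m + δ) := by push_cast; ring
      have hb2 : (∑ k ∈ (Finset.range (n + 1)).filter (fun k => ¬ k < 2 * m), singVal B k) ≤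
          tailm := by
        set T' := (Finset.range (n + 1)).filter (fun k => ¬ k < 2 * m) with hT'
        have hmem : ∀ k ∈ T', 2 * m ≤ k := by
          intro k hk
          simp only [hT', Finset.mem_filter, not_lt] at hk
          exact hk.2
        have step1 : (∑ k ∈ T', singVal B k) ≤ ∑ k ∈ T', s (k - m) := by
          apply Finset.sum_le_sum
          intro k hk
          exact singVal_sub_le A F m k hF hFr (le_trans (by omega) (hmem k hk))
        have step2 : (∑ k ∈ T', s (k - m)) = ∑ j ∈ T'.image (fun k => k - 2 * m), s (j + m) := by
          rw [Finset.sum_image]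
          · apply Finset.sum_congr rfl
            intro k hk
            congr 1
            have := hmem k hk
            omega
          · intro x hx y hy hxy
            have hx' := hmem x hx
            have hy' := hmem y hy
            simp only at hxy
            omega
        have step3 : (∑ j ∈ T'.image (fun k => k - 2 * m), s (j + m)) ≤ tailm :=
          Summable.sum_le_tsum _ (fun j _ => singVal_nonneg A _) hfs
        calc (∑ k ∈ T', singVal B k) ≤ ∑ k ∈ T', s (k - m) := step1
          _ = ∑ j ∈ T'.image (fun k => k - 2 * m), s (j + m) := step2
          _ ≤ tailm := step3
      linarith
    set K0 := 2 * m * (s m + δ) + tailm with hK0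
    have hK00 : 0 ≤ K0 := add_nonneg (mul_nonneg (by positivity) hsmδ0) htail0
    have hBmem : MemLorentz ψ B := by
      refine ⟨K0 / ψ 1, fun n => ?_⟩
      have hψn : ψ 1 ≤ ψ ((n : ℝ) + 1) := hψmono _ (by have := Nat.cast_nonneg (α := ℝ) n; linarith)
      calc (∑ k ∈ Finset.range (n + 1), singVal B k) ≤ K0 := hpart n
        _ = (K0 / ψ 1) * ψ 1 := by field_simp
        _ ≤ (K0 / ψ 1) * ψ ((n : ℝ) + 1) :=
            mul_le_mul_of_nonneg_left hψn (by positivity)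
    have hBnorm : lorentzNrm ψ B ≤ K0 / ψ 1 := by
      apply ciSup_le
      intro n
      have hψn : ψ 1 ≤ ψ ((n : ℝ) + 1) := hψmono _ (by have := Nat.cast_nonneg (α := ℝ) n; linarith)
      exact div_le_div₀ hK00 (hpart n) hψ1 hψn
    have hLnn : 0 ≤ lorentzNrm ψ B := by
      apply Real.iSup_nonneg
      intro n
      exact div_nonneg (Finset.sum_nonneg fun k _ => singVal_nonneg B k)
        (hψpos _ (by have := Nat.cast_nonneg (α := ℝ) n; linarith)).le
    have hτF : τ F = 0 := hsing F hF
    have hτA : τ A = τ B := by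
      have hAB : A = B + F := by rw [hB]; abel
      rw [hAB, map_add, hτF, add_zero]
    have hbound : ‖τ A‖ ≤ Kx * (K0 / ψ 1) := by
      rw [hτA]
      calc ‖τ B‖ ≤ M * lorentzNrm ψ B := hbdd B hBmem
        _ ≤ Kx * lorentzNrm ψ B := mul_le_mul_of_nonneg_right (le_max_left _ _) hLnn
        _ ≤ Kx * (K0 / ψ 1) := mul_le_mul_of_nonneg_left hBnorm hKx0
    have hK0le : K0 ≤ 2 * m * ((c + 1) * ((1 : ℝ) + m) ^ (-p)) +
        (T - ∑ i ∈ Finset.range m, s i) := by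
      have h1 : s m + δ ≤ (c + 1) * ((1 : ℝ) + m) ^ (-p) := by
        have := hpt m
        rw [hδ]
        nlinarith [hδpos]
      have h2 : tailm = T - ∑ i ∈ Finset.range m, s i := by
        have := Summable.sum_add_tsum_nat_add m hsum
        rw [htailm, hT]
        linarith [this]
      rw [hK0, h2]
      have : 2 * (m:ℝ) * (s m + δ) ≤ 2 * m * ((c + 1) * ((1 : ℝ) + m) ^ (-p)) :=
        mul_le_mul_of_nonneg_left h1 (by positivity)
      linarith
    calc ‖τ A‖ ≤ Kx * (K0 / ψ 1) := hbound
      _ ≤ Kx * ((2 * m * ((c + 1) * ((1 : ℝ) + m) ^ (-p)) +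
          (T - ∑ i ∈ Finset.range m, s i)) / ψ 1) := by
          apply mul_le_mul_of_nonneg_left _ hKx0
          exact (div_le_div_iff_of_pos_right hψ1).mpr hK0le
  -- the bound tends to 0
  have l1 : Tendsto (fun m : ℕ => T - ∑ i ∈ Finset.range m, s i) atTop (𝓝 0) := by
    have := hsum.hasSum.tendsto_sum_nat
    have h := tendsto_const_nhds (x := T) (f := atTop (α := ℕ)) |>.sub this
    simpa [hT] using h
  have core : Tendsto (fun m : ℕ => (m : ℝ) * ((1 : ℝ) + m) ^ (-p)) atTop (𝓝 0) := by
    have hup : Tendsto (fun m : ℕ => ((1 : ℝ) + m) ^ (1 - p)) atTop (𝓝 0) := by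
      have hr : Tendsto (fun x : ℝ => x ^ (-(p - 1))) atTop (𝓝 0) :=
        tendsto_rpow_neg_atTop (by linarith)
      have hn : Tendsto (fun m : ℕ => (1 : ℝ) + m) atTop atTop :=
        tendsto_atTop_add_const_left _ _ tendsto_natCast_atTop_atTop
      have := hr.comp hn
      simpa [Function.comp_def, show -(p - 1) = 1 - p by ring] using this
    apply squeeze_zero (fun m => by positivity) _ hup
    intro m
    have h1m : (0 : ℝ) < 1 + m := by positivity
    calc (m : ℝ) * ((1 : ℝ) + m) ^ (-p) ≤ (1 + m) * ((1 : ℝ) + m) ^ (-p) := by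
          apply mul_le_mul_of_nonneg_right _ (Real.rpow_pos_of_pos h1m _).le
          linarith
      _ = ((1 : ℝ) + m) ^ (1 - p) := by
          rw [show (1 : ℝ) - p = 1 + (-p) by ring, Real.rpow_add h1m, Real.rpow_one]
  have l2 : Tendsto (fun m : ℕ => 2 * (m:ℝ) * ((c + 1) * ((1 : ℝ) + m) ^ (-p)))
      atTop (𝓝 0) := by
    have := core.const_mul (2 * (c + 1))
    simp only [mul_zero] at this
    refine this.congr fun m => by ring
  have hlim : Tendsto (fun m : ℕ => Kx * ((2 * m * ((c + 1) * ((1 : ℝ) + m) ^ (-p)) +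
      (T - ∑ i ∈ Finset.range m, s i)) / ψ 1)) atTop (𝓝 0) := by
    have := ((l2.add l1).div_const (ψ 1)).const_mul Kx
    simpa using this
  have hn0 : ‖τ A‖ ≤ 0 := ge_of_tendsto' hlim key
  exact norm_le_zero_iff.mp hn0

end
end

section
/- Let n ≥ 2 and let H₁,…,H_{n+2} be (not necessarily bounded) self-adjoint operators in H. (i) For every f ∈ C(ℝⁿ) ∩ L¹(ℝⁿ) with f̂ ∈ L¹(ℝⁿ), the multilinear map T_f^{H₁,…,Hₙ} : B(H)×···×B(H) → B(H) is bounded with ‖T_f^{H₁,…,Hₙ}‖ ≤ (2π)^{−n/2} ‖f̂‖_{L¹(ℝⁿ)}. (ii) For every f ∈ W_1(ℝⁿ) and 1 ≤ j ≤ n, T_{f_j^{[1]}}^{H₁,…,H_{n+1}} is bounded with ‖T_{f_j^{[1]}}^{H₁,…,H_{n+1}}‖ ≤ (2π)^{−n/2} ‖(∂f/∂λ_j)^∧‖_{L¹(ℝⁿ)}. (iii) For every f ∈ W_2(ℝⁿ) and 1 ≤ j ≠ k ≤ n, T_{f_{j,k}^{[2]}}^{H₁,…,H_{n+2}} and T_{f_j^{[2]}}^{H₁,…,H_{n+2}}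 are bounded with ‖T_{f_{j,k}^{[2]}}^{H₁,…,H_{n+2}}‖ ≤ (2π)^{−n/2} ‖(∂²f/∂λ_j∂λ_k)^∧‖_{L¹(ℝⁿ)} and ‖T_{f_j^{[2]}}^{H₁,…,H_{n+2}}‖ ≤ (1/2)(2π)^{−n/2} ‖(∂²f/∂λ_j²)^∧‖_{L¹(ℝⁿ)}. -/
open MeasureTheory Complex Real Filter Topology

noncomputable section

variable {H : Type*} [NormedAddCommGroup H] [InnerProductSpace ℂ H] [CompleteSpace H]

/-- The symmetric-convention Fourier transform `f̂(ξ) = (2π)^{-n/2} ∫ e^{-i x·ξ} f(x) dx`. -/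
def ft {n : ℕ} (f : (Fin n → ℝ) → ℂ) (ξ : Fin n → ℝ) : ℂ :=
  ((2 * π) ^ (-(n : ℝ) / 2) : ℝ) •
    ∫ x : Fin n → ℝ, Complex.exp (-Complex.I * ∑ j, (x j : ℂ) * (ξ j : ℂ)) * f x

/-- The partial derivative `∂f/∂λⱼ`. -/
def pd {n : ℕ} (j : Fin n) (f : (Fin n → ℝ) → ℂ) (x : Fin n → ℝ) : ℂ :=
  fderiv ℝ f x (Pi.single j 1)

/-- The Wiener class `W₁(ℝⁿ)`. -/
def MemW1 {n : ℕ} (f : (Fin n → ℝ) → ℂ) : Prop :=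
  ContDiff ℝ 1 f ∧ Integrable f ∧ Integrable (ft f) ∧
    ∀ j : Fin n, Integrable (pd j f) ∧ Integrable (ft (pd j f))

/-- The Wiener class `W₂(ℝⁿ)`. -/
def MemW2 {n : ℕ} (f : (Fin n → ℝ) → ℂ) : Prop :=
  ContDiff ℝ 2 f ∧ Integrable f ∧ Integrable (ft f) ∧
    (∀ j : Fin n, Integrable (pd j f) ∧ Integrable (ft (pd j f))) ∧
    ∀ j k : Fin n, Integrable (pd k (pd j f)) ∧ Integrable (ft (pd k (pd j f)))

/-- A strongly continuous one-parameter unitary group: a faithful stand-in for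
`t ↦ e^{itA}` with `A` a (possibly unbounded) self-adjoint operator, by Stone's theorem. -/
structure IsUnitaryGroup (U : ℝ → (H →L[ℂ] H)) : Prop where
  map_zero : U 0 = 1
  map_add : ∀ s t : ℝ, U (s + t) = U s * U t
  star_eq : ∀ t : ℝ, ContinuousLinearMap.adjoint (U t) = U (-t)
  strong_cont : ∀ x : H, Continuous fun t : ℝ => U t x

/-- Extension of `t : Fin n → ℝ` to `ℕ` by zero. -/
def fext {n : ℕ} (t : Fin n → ℝ) (l : ℕ) : ℝ := if h : l < n then t ⟨l, h⟩ else 0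

/-- The multiple operator integral `T_f^{H₀,…,H_{n-1}}(V₀,…,V_{n-2})` (0-based indexing),
where `W j = e^{i·H_j}`:
`T_f(V) = (2π)^{-n/2} ∫ f̂(t) e^{it₀H₀}V₀ ⋯ V_{n-2} e^{it_{n-1}H_{n-1}} dt`. -/
def moi0 (n : ℕ) (g : (Fin n → ℝ) → ℂ) (W : ℕ → ℝ → (H →L[ℂ] H))
    (V : ℕ → (H →L[ℂ] H)) : H →L[ℂ] H :=
  ((2 * π) ^ (-(n : ℝ) / 2) : ℝ) •
    ∫ t : Fin n → ℝ, ft g t •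
      (List.ofFn fun l : Fin n => W l (t l) * (if (l : ℕ) < n - 1 then V l else 1)).prod

/-- The multiple operator integral `T_{f_j^{[1]}}^{H₀,…,Hₙ}(V₀,…,V_{n-1})` (0-based),
written out by the Fourier representation of the first-order divided difference:
`(i/(2π)^{n/2}) ∫∫₀^{t_j} f̂(t) (∏_{l<j} e^{it_lH_l}V_l) e^{i(t_j-s)H_j}V_j e^{isH_{j+1}}
(∏_{l>j} V_l e^{it_lH_{l+1}}) ds dt`. -/
def moi1 (n : ℕ) (g : (Fin n → ℝ) → ℂ) (W : ℕ → ℝ → (H →L[ℂ] H)) (V : ℕ → (H →L[ℂ] H))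
    (j : ℕ) : H →L[ℂ] H :=
  ((((2 * π) ^ (-(n : ℝ) / 2) : ℝ) : ℂ) * Complex.I) •
    ∫ t : Fin n → ℝ, ft g t •
      ∫ s in (0:ℝ)..(fext t j),
        (((List.range j).map fun l => W l (fext t l) * V l).prod) *
        (W j (fext t j - s) * V j * W (j+1) s) *
        (((List.range (n - 1 - j)).map fun m => V (j+1+m) * W (j+2+m) (fext t (j+1+m))).prod)

/-- The multiple operator integral `T_{f_j^{[2]}}^{H₀,…,H_{n+1}}(V₀,…,Vₙ)` (0-based). -/
def moi2same (n : ℕ) (g : (Fin n → ℝ) → ℂ) (W : ℕ → ℝ → (H →L[ℂ] H))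
    (V : ℕ → (H →L[ℂ] H)) (j : ℕ) : H →L[ℂ] H :=
  (-(((2 * π) ^ (-(n : ℝ) / 2) : ℝ) : ℂ)) •
    ∫ t : Fin n → ℝ, ft g t •
      ∫ s in (0:ℝ)..(fext t j), ∫ p in (0:ℝ)..s,
        (((List.range j).map fun l => W l (fext t l) * V l).prod) *
        (W j (fext t j - s) * V j * W (j+1) (s - p) * V (j+1) * W (j+2) p) *
        (((List.range (n - 1 - j)).map fun m => V (j+2+m) * W (j+3+m) (fext t (j+1+m))).prod)

/-- The multiple operator integral `T_{f_{j,k}^{[2]}}^{H₀,…,H_{n+1}}(V₀,…,Vₙ)` for `j < k`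
(0-based). -/
def moi2jk (n : ℕ) (g : (Fin n → ℝ) → ℂ) (W : ℕ → ℝ → (H →L[ℂ] H)) (V : ℕ → (H →L[ℂ] H))
    (j k : ℕ) : H →L[ℂ] H :=
  (-(((2 * π) ^ (-(n : ℝ) / 2) : ℝ) : ℂ)) •
    ∫ t : Fin n → ℝ, ft g t •
      ∫ s in (0:ℝ)..(fext t j), ∫ p in (0:ℝ)..(fext t k),
        (((List.range j).map fun l => W l (fext t l) * V l).prod) *
        (W j (fext t j - s) * V j * W (j+1) s * V (j+1)) *
        (((List.range (k - 1 - j)).map fun m => W (j+2+m) (fext t (j+1+m)) * V (j+2+m)).prod) *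
        (W (k+1) (fext t k - p) * V (k+1) * W (k+2) p) *
        (((List.range (n - 1 - k)).map fun m => V (k+2+m) * W (k+3+m) (fext t (k+1+m))).prod)


/-! ### Auxiliary lemmas -/

section Aux

open FourierTransform

lemma listprod_range_eq (m : ℕ) (b : ℕ → ℝ) :
    ((List.range m).map b).prod = ∏ i ∈ Finset.range m, b i := by
  induction m with
  | zero => simp
  | succ m ih => rw [List.range_succ, Finset.prod_range_succ, ← ih]; simp

lemma norm_prod_map_le {ι : Type*} (l : List ι) (g : ι → (H →L[ℂ] H)) (b : ι → ℝ)
    (h : ∀ i ∈ l, ‖g i‖ ≤ b i) : ‖(l.map g).prod‖ ≤ (l.map b).prod := by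
  induction l with
  | nil => simp only [List.map_nil, List.prod_nil]; exact ContinuousLinearMap.norm_id_le
  | cons a l ih =>
    simp only [List.map_cons, List.prod_cons]
    calc ‖g a * (l.map g).prod‖ ≤ ‖g a‖ * ‖(l.map g).prod‖ := norm_mul_le _ _
    _ ≤ b a * (l.map b).prod := by
        apply mul_le_mul (h a (by simp)) (ih fun i hi => h i (by simp [hi])) (norm_nonneg _)
        exact le_trans (norm_nonneg _) (h a (by simp))

lemma IsUnitaryGroup.norm_le {U : ℝ → (H →L[ℂ] H)} (h : IsUnitaryGroup U) (t : ℝ) :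
    ‖U t‖ ≤ 1 := by
  apply ContinuousLinearMap.opNorm_le_bound _ zero_le_one
  intro x
  rw [one_mul]
  have key : inner ℂ (U t x) (U t x) = inner ℂ x x := by
    calc inner ℂ (U t x) (U t x)
        = inner ℂ x (ContinuousLinearMap.adjoint (U t) (U t x)) := by
          rw [ContinuousLinearMap.adjoint_inner_right]
    _ = inner ℂ x ((U (-t) * U t) x) := by rw [h.star_eq]; rfl
    _ = inner ℂ x x := by rw [← h.map_add, neg_add_cancel, h.map_zero]; rfl
  have h2 : ‖U t x‖ ^ 2 = ‖x‖ ^ 2 := by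
    rw [← @inner_self_eq_norm_sq ℂ, ← @inner_self_eq_norm_sq ℂ, key]
  nlinarith [norm_nonneg (U t x), norm_nonneg x]

lemma norm_AVB_le {A B V : H →L[ℂ] H} (hA : ‖A‖ ≤ 1) (hB : ‖B‖ ≤ 1) : ‖A * V * B‖ ≤ ‖V‖ := by
  calc ‖A * V * B‖ ≤ ‖A‖ * ‖V‖ * ‖B‖ := norm_mul₃_le
  _ ≤ 1 * ‖V‖ * 1 := by gcongr <;> assumption
  _ = ‖V‖ := by ring

lemma norm_AVBWC_le {A B C V W : H →L[ℂ] H} (hA : ‖A‖ ≤ 1) (hB : ‖B‖ ≤ 1) (hC : ‖C‖ ≤ 1) :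
    ‖A * V * B * W * C‖ ≤ ‖V‖ * ‖W‖ := by
  calc ‖A * V * B * W * C‖ ≤ ‖A * V * B‖ * ‖W‖ * ‖C‖ := norm_mul₃_le
  _ ≤ ‖V‖ * ‖W‖ * 1 := by
      gcongr <;> first | exact norm_AVB_le hA hB | exact hC
  _ = ‖V‖ * ‖W‖ := by ring

lemma norm_AVBW_le {A B V W : H →L[ℂ] H} (hA : ‖A‖ ≤ 1) (hB : ‖B‖ ≤ 1) :
    ‖A * V * B * W‖ ≤ ‖V‖ * ‖W‖ := by
  calc ‖A * V * B * W‖ ≤ ‖A * V * B‖ * ‖W‖ := norm_mul_le _ _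
  _ ≤ ‖V‖ * ‖W‖ := by gcongr; exact norm_AVB_le hA hB

lemma prod_split3 (b : ℕ → ℝ) {N a c : ℕ} (h : N = a + 1 + c) :
    ∏ l ∈ Finset.range N, b l =
      (∏ l ∈ Finset.range a, b l) * b a * ∏ m ∈ Finset.range c, b (a + 1 + m) := by
  subst h
  rw [Finset.prod_range_add b (a + 1) c, Finset.prod_range_succ]

lemma prod_split4 (b : ℕ → ℝ) {N a c : ℕ} (h : N = a + 2 + c) :
    ∏ l ∈ Finset.range N, b l =
      (∏ l ∈ Finset.range a, b l) * (b a * b (a + 1)) * ∏ m ∈ Finset.range c, b (a + 2 + m) := by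
  subst h
  rw [Finset.prod_range_add b (a + 2) c, Finset.prod_range_succ, Finset.prod_range_succ]
  ring

lemma prod_split5 (b : ℕ → ℝ) {N a a' c e : ℕ} (h : N = a + 2 + c + 1 + e)
    (h2 : a' = a + 2 + c) :
    ∏ l ∈ Finset.range N, b l =
      (∏ l ∈ Finset.range a, b l) * (b a * b (a + 1)) * (∏ m ∈ Finset.range c, b (a + 2 + m)) *
        b a' * ∏ m ∈ Finset.range e, b (a' + 1 + m) := by
  subst h2; subst h
  rw [Finset.prod_range_add b (a + 2 + c + 1) e, Finset.prod_range_succ,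
    Finset.prod_range_add b (a + 2) c, Finset.prod_range_succ, Finset.prod_range_succ]
  ring

lemma fext_coe {n : ℕ} (t : Fin n → ℝ) (j : Fin n) : fext t (j : ℕ) = t j := by
  rw [fext, dif_pos j.isLt]

/-- The dot-product pairing on `Fin n → ℝ` as a continuous bilinear map. -/
def dotL (n : ℕ) : (Fin n → ℝ) →L[ℝ] (Fin n → ℝ) →L[ℝ] ℝ :=
  ∑ j : Fin n, (((ContinuousLinearMap.mul ℝ ℝ).comp
    (ContinuousLinearMap.proj j)).flip.comp (ContinuousLinearMap.proj (R := ℝ) j)).flip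

@[simp] lemma dotL_apply {n : ℕ} (v w : Fin n → ℝ) : dotL n v w = ∑ j, v j * w j := by
  simp [dotL, ContinuousLinearMap.sum_apply]

lemma ft_eq {n : ℕ} (f : (Fin n → ℝ) → ℂ) (ξ : Fin n → ℝ) :
    ft f ξ = ((2 * π) ^ (-(n : ℝ) / 2) : ℝ) •
      VectorFourier.fourierIntegral 𝐞 volume (dotL n).toLinearMap₁₂ f ((2 * π)⁻¹ • ξ) := by
  rw [ft, VectorFourier.fourierIntegral]
  congr 1
  apply integral_congr_ae; filter_upwards with x
  rw [Circle.smul_def, Real.fourierChar_apply]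
  congr 1
  have h0 : ∀ j, x j * ((2 * π)⁻¹ • ξ) j = (2 * π)⁻¹ * (x j * ξ j) := by
    intro j; simp [Pi.smul_apply]; ring
  rw [ContinuousLinearMap.toLinearMap₁₂_apply_apply_apply, dotL_apply]
  simp_rw [h0, ← Finset.mul_sum]
  have hπ : (2 * π) ≠ 0 := by positivity
  have h2 : ((2 * π : ℝ) : ℂ) * ((2 * π : ℝ) : ℂ)⁻¹ = 1 := by
    rw [mul_inv_cancel₀ (by exact_mod_cast hπ)]
  push_cast at h2 ⊢
  rw [show (2 * ↑π * -((2 * ↑π)⁻¹ * ∑ j : Fin n, (x j : ℂ) * ξ j) * Complex.I : ℂ)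
      = -(((2 * ↑π) * (2 * ↑π)⁻¹) * ((∑ j : Fin n, (x j : ℂ) * ξ j) * Complex.I)) by ring, h2]
  ring_nf

lemma integrable_fderiv_of_pd {n : ℕ} {f : (Fin n → ℝ) → ℂ} (hc : ContDiff ℝ 1 f)
    (hd : ∀ l, Integrable (pd l f)) : Integrable (fderiv ℝ f) := by
  have hmeas : AEStronglyMeasurable (fderiv ℝ f) volume :=
    (hc.continuous_fderiv one_ne_zero).aestronglyMeasurable
  apply Integrable.mono' (g := fun x => ∑ l, ‖pd l f x‖)
  · exact integrable_finset_sum _ fun l _ => (hd l).norm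
  · exact hmeas
  · filter_upwards with x
    apply ContinuousLinearMap.opNorm_le_bound _ (by positivity)
    intro v
    have hv : v = ∑ l, v l • (Pi.single l 1 : Fin n → ℝ) := by
      conv_lhs => rw [← Finset.univ_sum_single v]
      refine Finset.sum_congr rfl fun l _ => ?_
      ext m
      simp [Pi.single_apply]
    calc ‖fderiv ℝ f x v‖
        = ‖fderiv ℝ f x (∑ l, v l • (Pi.single l 1 : Fin n → ℝ))‖ := by rw [← hv]
    _ = ‖∑ l, v l • fderiv ℝ f x (Pi.single l 1)‖ := by
        rw [map_sum]; simp_rw [ContinuousLinearMap.map_smul]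
    _ ≤ ∑ l, ‖v l • fderiv ℝ f x (Pi.single l 1)‖ := norm_sum_le _ _
    _ ≤ ∑ l, ‖pd l f x‖ * ‖v‖ := by
        apply Finset.sum_le_sum; intro l _
        rw [norm_smul, pd, mul_comm]
        exact mul_le_mul_of_nonneg_left (by simpa using norm_le_pi_norm v l) (norm_nonneg _)
    _ = (∑ l, ‖pd l f x‖) * ‖v‖ := by rw [Finset.sum_mul]

lemma ft_pd {n : ℕ} {f : (Fin n → ℝ) → ℂ} (hc : ContDiff ℝ 1 f) (hf : Integrable f)
    (hd : ∀ l, Integrable (pd l f)) (j : Fin n) (ξ : Fin n → ℝ) :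
    ft (pd j f) ξ = (Complex.I * (ξ j : ℂ)) * ft f ξ := by
  have hfd : Integrable (fderiv ℝ f) := integrable_fderiv_of_pd hc hd
  have h'f : Differentiable ℝ f := hc.differentiable one_ne_zero
  rw [ft_eq, ft_eq]
  set w : Fin n → ℝ := (2 * π)⁻¹ • ξ with hw
  have h1 : VectorFourier.fourierIntegral 𝐞 volume (dotL n).toLinearMap₁₂ (pd j f) w
      = (VectorFourier.fourierIntegral 𝐞 volume (dotL n).toLinearMap₁₂ (fderiv ℝ f) w)
        (Pi.single j 1) :=
    (Real.fourierIntegral_continuousLinearMap_apply' hfd).symm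
  rw [h1, VectorFourier.fourierIntegral_fderiv (dotL n) hf h'f hfd]
  rw [VectorFourier.fourierSMulRight_apply]
  have h2 : (-(dotL n).flip) w (Pi.single j 1) = -(w j) := by
    simp [ContinuousLinearMap.flip_apply, Finset.sum_eq_single j, Pi.single_apply]
  rw [h2]
  have h3 : ((w j : ℝ) : ℂ) = (2 * (π : ℂ))⁻¹ * (ξ j : ℂ) := by
    simp only [hw, Pi.smul_apply, smul_eq_mul]; push_cast; ring
  have hπ : (π : ℂ) ≠ 0 := Complex.ofReal_ne_zero.2 Real.pi_ne_zero
  simp only [Complex.real_smul, smul_eq_mul, Complex.ofReal_neg, h3]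
  field_simp

lemma contDiff_pd {n : ℕ} {f : (Fin n → ℝ) → ℂ} (hc : ContDiff ℝ 2 f) (j : Fin n) :
    ContDiff ℝ 1 (pd j f) := by
  have h1 : ContDiff ℝ 1 (fderiv ℝ f) := hc.fderiv_right (by norm_num)
  exact h1.clm_apply contDiff_const

lemma norm_ft_pd {n : ℕ} {f : (Fin n → ℝ) → ℂ} (hc : ContDiff ℝ 1 f) (hf : Integrable f)
    (hd : ∀ l, Integrable (pd l f)) (j : Fin n) (ξ : Fin n → ℝ) :
    ‖ft (pd j f) ξ‖ = |ξ j| * ‖ft f ξ‖ := by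
  rw [ft_pd hc hf hd j ξ]
  simp [norm_mul]

lemma norm_intervalIntegral_le_sq {E : Type*} [NormedAddCommGroup E] [NormedSpace ℝ E]
    (g : ℝ → E) (a C : ℝ) (h : ∀ s, ‖g s‖ ≤ C * |s|) :
    ‖∫ s in (0:ℝ)..a, g s‖ ≤ C * (a ^ 2 / 2) := by
  have habs : ∫ s in Set.uIoc 0 a, |s| = a ^ 2 / 2 := by
    rcases le_or_gt 0 a with ha | ha
    · rw [Set.uIoc_of_le ha, ← intervalIntegral.integral_of_le ha,
        intervalIntegral.integral_congr (g := fun s => s) ?_, integral_id]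
      · ring
      · intro s hs
        rw [Set.uIcc_of_le ha] at hs
        exact abs_of_nonneg hs.1
    · rw [Set.uIoc_of_ge ha.le, ← intervalIntegral.integral_of_le ha.le,
        intervalIntegral.integral_congr (g := fun s => -s) ?_]
      · rw [intervalIntegral.integral_neg, integral_id]; ring
      · intro s hs
        rw [Set.uIcc_of_le ha.le] at hs
        exact abs_of_nonpos hs.2
  calc ‖∫ s in (0:ℝ)..a, g s‖ ≤ ∫ s in Set.uIoc 0 a, ‖g s‖ :=
        intervalIntegral.norm_integral_le_integral_norm_uIoc
  _ ≤ ∫ s in Set.uIoc 0 a, C * |s| := by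
      apply integral_mono_of_nonneg (Filter.Eventually.of_forall fun s => norm_nonneg _)
        ?_ (Filter.Eventually.of_forall fun s => h s)
      rw [Set.uIoc]
      exact (continuous_const.mul _root_.continuous_abs).integrableOn_Ioc
  _ = C * (a ^ 2 / 2) := by rw [integral_const_mul, habs]

end Aux

/- STATEMENT 2: boundedness of the multiple operator integrals with Wiener-class symbols:
(i) `‖T_f‖ ≤ (2π)^{-n/2}‖f̂‖₁`, (ii) `‖T_{f_j^{[1]}}‖ ≤ (2π)^{-n/2}‖(∂_j f)^∧‖₁`,
(iii) `‖T_{f_{j,k}^{[2]}}‖ ≤ (2π)^{-n/2}‖(∂_j∂_k f)^∧‖₁` and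
`‖T_{f_j^{[2]}}‖ ≤ ½(2π)^{-n/2}‖(∂_j² f)^∧‖₁`, for arbitrary (possibly unbounded)
self-adjoint `H₁,…,H_{n+2}`, encoded by their unitary groups. Boundedness of a multilinear
map is expressed by the pointwise estimate against the product of the norms of the
arguments. For (iii) with `j ≠ k` it suffices (by the symmetry `f_{j,k} = f_{k,j}`)
to consider `j < k`. -/

set_option maxHeartbeats 1600000 in
theorem moi_bounds {n : ℕ} (hn : 2 ≤ n)
    (U : ℕ → ℝ → (H →L[ℂ] H)) (hU : ∀ m < n + 2, IsUnitaryGroup (U m)) :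
    -- (i)
    (∀ f : (Fin n → ℝ) → ℂ, Continuous f → Integrable f → Integrable (ft f) →
      ∀ V : ℕ → (H →L[ℂ] H),
        ‖moi0 n f U V‖ ≤
          ((2 * π) ^ (-(n : ℝ) / 2)) * (∫ t : Fin n → ℝ, ‖ft f t‖) *
            ∏ l ∈ Finset.range (n - 1), ‖V l‖) ∧
    -- (ii)
    (∀ f : (Fin n → ℝ) → ℂ, MemW1 f → ∀ j : Fin n, ∀ V : ℕ → (H →L[ℂ] H),
        ‖moi1 n f U V j‖ ≤
          ((2 * π) ^ (-(n : ℝ) / 2)) * (∫ t : Fin n → ℝ, ‖ft (pd j f) t‖) *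
            ∏ l ∈ Finset.range n, ‖V l‖) ∧
    -- (iii)
    (∀ f : (Fin n → ℝ) → ℂ, MemW2 f → ∀ j k : Fin n, ∀ V : ℕ → (H →L[ℂ] H),
        ((j : ℕ) < (k : ℕ) →
          ‖moi2jk n f U V j k‖ ≤
            ((2 * π) ^ (-(n : ℝ) / 2)) * (∫ t : Fin n → ℝ, ‖ft (pd k (pd j f)) t‖) *
              ∏ l ∈ Finset.range (n + 1), ‖V l‖) ∧
        ‖moi2same n f U V j‖ ≤
          (1 / 2) * ((2 * π) ^ (-(n : ℝ) / 2)) *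
            (∫ t : Fin n → ℝ, ‖ft (pd j (pd j f)) t‖) *
            ∏ l ∈ Finset.range (n + 1), ‖V l‖) := by
  
  have hcpos : (0:ℝ) < (2 * π) ^ (-(n : ℝ) / 2) := Real.rpow_pos_of_pos (by positivity) _
  set c : ℝ := (2 * π) ^ (-(n : ℝ) / 2) with hcdef
  refine ⟨?_, ?_, ?_⟩
  · -- Part (i)
    intro f _ _ hft V
    obtain ⟨N, rfl⟩ : ∃ N, n = N + 1 := ⟨n - 1, by omega⟩
    set C := ∏ l ∈ Finset.range (N + 1 - 1), ‖V l‖ with hCdef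
    have hC : 0 ≤ C := Finset.prod_nonneg fun _ _ => norm_nonneg _
    have key : ∀ t : Fin (N+1) → ℝ,
        ‖ft f t • (List.ofFn fun l : Fin (N+1) =>
          U l (t l) * (if (l : ℕ) < N + 1 - 1 then V l else 1)).prod‖ ≤ ‖ft f t‖ * C := by
      intro t
      rw [norm_smul]
      apply mul_le_mul_of_nonneg_left ?_ (norm_nonneg _)
      rw [List.ofFn_eq_map]
      refine le_trans (norm_prod_map_le _ _
        (fun l : Fin (N+1) => if (l : ℕ) < N + 1 - 1 then ‖V l‖ else 1) ?_) ?_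
      · intro l _
        split_ifs with hl
        · calc ‖U l (t l) * V l‖ ≤ ‖U (l : ℕ) (t l)‖ * ‖V (l : ℕ)‖ := norm_mul_le _ _
          _ ≤ 1 * ‖V (l : ℕ)‖ := by
              gcongr
              exact (hU l (by omega)).norm_le _
          _ = ‖V (l : ℕ)‖ := one_mul _
        · rw [mul_one]
          exact (hU l (by omega)).norm_le _
      · refine le_of_eq ?_
        rw [← List.ofFn_eq_map, List.prod_ofFn]
        calc (∏ l : Fin (N+1), if (l:ℕ) < N + 1 - 1 then ‖V (l:ℕ)‖ else 1)
            = ∏ i ∈ Finset.range (N+1), (if i < N + 1 - 1 then ‖V i‖ else 1) :=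
              Fin.prod_univ_eq_prod_range (fun i : ℕ => if i < N + 1 - 1 then ‖V i‖ else 1) (N+1)
        _ = C := by
            rw [Finset.prod_range_succ, if_neg (by omega), mul_one, hCdef]
            simp only [Nat.add_sub_cancel]
            exact Finset.prod_congr rfl fun i hi => if_pos (Finset.mem_range.mp hi)
    calc ‖moi0 (N+1) f U V‖
        = c * ‖∫ t : Fin (N+1) → ℝ, ft f t • (List.ofFn fun l : Fin (N+1) =>
            U l (t l) * (if (l : ℕ) < N + 1 - 1 then V l else 1)).prod‖ := by
          rw [moi0, norm_smul, ← hcdef, Real.norm_eq_abs, _root_.abs_of_nonneg hcpos.le]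
    _ ≤ c * ∫ t : Fin (N+1) → ℝ, ‖ft f t • (List.ofFn fun l : Fin (N+1) =>
            U l (t l) * (if (l : ℕ) < N + 1 - 1 then V l else 1)).prod‖ :=
          mul_le_mul_of_nonneg_left (norm_integral_le_integral_norm _) hcpos.le
    _ ≤ c * ∫ t : Fin (N+1) → ℝ, ‖ft f t‖ * C := by
          apply mul_le_mul_of_nonneg_left ?_ hcpos.le
          exact integral_mono_of_nonneg (Filter.Eventually.of_forall fun t => norm_nonneg _)
            (hft.norm.mul_const C) (Filter.Eventually.of_forall key)
    _ = c * (∫ t : Fin (N+1) → ℝ, ‖ft f t‖) * C := by rw [integral_mul_const, mul_assoc]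
  · -- Part (ii)
    intro f hf j V
    obtain ⟨hc1, hfi, hfti, hder⟩ := hf
    have hdj : ∀ l, Integrable (pd l f) := fun l => (hder l).1
    set C := ∏ l ∈ Finset.range n, ‖V l‖ with hCdef
    have hC : 0 ≤ C := Finset.prod_nonneg fun _ _ => norm_nonneg _
    have hjn : (j : ℕ) < n := j.isLt
    have hinner : ∀ t : Fin n → ℝ, ∀ s : ℝ,
        ‖(((List.range (j:ℕ)).map fun l => U l (fext t l) * V l).prod) *
          (U (j:ℕ) (fext t (j:ℕ) - s) * V (j:ℕ) * U ((j:ℕ)+1) s) *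
          (((List.range (n - 1 - (j:ℕ))).map fun m =>
            V ((j:ℕ)+1+m) * U ((j:ℕ)+2+m) (fext t ((j:ℕ)+1+m))).prod)‖ ≤ C := by
      intro t s
      have h_head : ‖((List.range (j:ℕ)).map fun l => U l (fext t l) * V l).prod‖ ≤
          ∏ l ∈ Finset.range (j:ℕ), ‖V l‖ := by
        rw [← listprod_range_eq]
        apply norm_prod_map_le
        intro l hl
        have hl' := List.mem_range.mp hl
        calc ‖U l (fext t l) * V l‖ ≤ ‖U l (fext t l)‖ * ‖V l‖ := norm_mul_le _ _
        _ ≤ 1 * ‖V l‖ := by gcongr; exact (hU l (by omega)).norm_le _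
        _ = ‖V l‖ := one_mul _
      have h_mid : ‖U (j:ℕ) (fext t (j:ℕ) - s) * V (j:ℕ) * U ((j:ℕ)+1) s‖ ≤ ‖V (j:ℕ)‖ :=
        norm_AVB_le ((hU _ (by omega)).norm_le _) ((hU _ (by omega)).norm_le _)
      have h_tail : ‖((List.range (n - 1 - (j:ℕ))).map fun m =>
          V ((j:ℕ)+1+m) * U ((j:ℕ)+2+m) (fext t ((j:ℕ)+1+m))).prod‖ ≤
          ∏ m ∈ Finset.range (n - 1 - (j:ℕ)), ‖V ((j:ℕ)+1+m)‖ := by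
        rw [← listprod_range_eq]
        apply norm_prod_map_le
        intro m hm
        have hm' := List.mem_range.mp hm
        calc ‖V ((j:ℕ)+1+m) * U ((j:ℕ)+2+m) (fext t ((j:ℕ)+1+m))‖
            ≤ ‖V ((j:ℕ)+1+m)‖ * ‖U ((j:ℕ)+2+m) (fext t ((j:ℕ)+1+m))‖ := norm_mul_le _ _
        _ ≤ ‖V ((j:ℕ)+1+m)‖ * 1 := by gcongr; exact (hU _ (by omega)).norm_le _
        _ = ‖V ((j:ℕ)+1+m)‖ := mul_one _
      refine le_trans norm_mul₃_le ?_
      rw [hCdef, prod_split3 (fun l => ‖V l‖)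
        (show n = (j:ℕ) + 1 + (n - 1 - (j:ℕ)) by omega)]
      gcongr <;> first | exact h_head | exact h_mid | exact h_tail
    have houter : ∀ t : Fin n → ℝ,
        ‖ft f t • ∫ s in (0:ℝ)..(fext t (j:ℕ)),
          (((List.range (j:ℕ)).map fun l => U l (fext t l) * V l).prod) *
          (U (j:ℕ) (fext t (j:ℕ) - s) * V (j:ℕ) * U ((j:ℕ)+1) s) *
          (((List.range (n - 1 - (j:ℕ))).map fun m =>
            V ((j:ℕ)+1+m) * U ((j:ℕ)+2+m) (fext t ((j:ℕ)+1+m))).prod)‖ ≤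
          ‖ft (pd j f) t‖ * C := by
      intro t
      rw [norm_smul]
      have h1 : ‖∫ s in (0:ℝ)..(fext t (j:ℕ)),
          (((List.range (j:ℕ)).map fun l => U l (fext t l) * V l).prod) *
          (U (j:ℕ) (fext t (j:ℕ) - s) * V (j:ℕ) * U ((j:ℕ)+1) s) *
          (((List.range (n - 1 - (j:ℕ))).map fun m =>
            V ((j:ℕ)+1+m) * U ((j:ℕ)+2+m) (fext t ((j:ℕ)+1+m))).prod)‖ ≤
          C * |fext t (j:ℕ) - 0| :=
        intervalIntegral.norm_integral_le_of_norm_le_const fun s _ => hinner t s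
      refine le_trans (mul_le_mul_of_nonneg_left h1 (norm_nonneg _)) (le_of_eq ?_)
      rw [sub_zero, fext_coe, norm_ft_pd hc1 hfi hdj j t]
      ring
    calc ‖moi1 n f U V (j:ℕ)‖
        = c * ‖∫ t : Fin n → ℝ, ft f t • ∫ s in (0:ℝ)..(fext t (j:ℕ)),
            (((List.range (j:ℕ)).map fun l => U l (fext t l) * V l).prod) *
            (U (j:ℕ) (fext t (j:ℕ) - s) * V (j:ℕ) * U ((j:ℕ)+1) s) *
            (((List.range (n - 1 - (j:ℕ))).map fun m =>
              V ((j:ℕ)+1+m) * U ((j:ℕ)+2+m) (fext t ((j:ℕ)+1+m))).prod)‖ := by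
          have hsc : ‖((c : ℝ) : ℂ) * Complex.I‖ = c := by
            rw [norm_mul, Complex.norm_I, mul_one, Complex.norm_real, Real.norm_eq_abs,
              _root_.abs_of_nonneg hcpos.le]
          rw [moi1, norm_smul, ← hcdef, hsc]
    _ ≤ c * ∫ t : Fin n → ℝ, ‖ft f t • ∫ s in (0:ℝ)..(fext t (j:ℕ)),
            (((List.range (j:ℕ)).map fun l => U l (fext t l) * V l).prod) *
            (U (j:ℕ) (fext t (j:ℕ) - s) * V (j:ℕ) * U ((j:ℕ)+1) s) *
            (((List.range (n - 1 - (j:ℕ))).map fun m =>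
              V ((j:ℕ)+1+m) * U ((j:ℕ)+2+m) (fext t ((j:ℕ)+1+m))).prod)‖ :=
          mul_le_mul_of_nonneg_left (norm_integral_le_integral_norm _) hcpos.le
    _ ≤ c * ∫ t : Fin n → ℝ, ‖ft (pd j f) t‖ * C := by
          apply mul_le_mul_of_nonneg_left ?_ hcpos.le
          exact integral_mono_of_nonneg (Filter.Eventually.of_forall fun t => norm_nonneg _)
            (((hder j).2).norm.mul_const C) (Filter.Eventually.of_forall houter)
    _ = c * (∫ t : Fin n → ℝ, ‖ft (pd j f) t‖) * C := by rw [integral_mul_const, mul_assoc]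
  · -- Part (iii)
    intro f hf j k V
    obtain ⟨hc2, hfi, hfti, h1, h2⟩ := hf
    have hc1 : ContDiff ℝ 1 f := hc2.of_le (by norm_num)
    have hdj : ∀ l, Integrable (pd l f) := fun l => (h1 l).1
    set C := ∏ l ∈ Finset.range (n + 1), ‖V l‖ with hCdef
    have hC : 0 ≤ C := Finset.prod_nonneg fun _ _ => norm_nonneg _
    have hjn : (j : ℕ) < n := j.isLt
    have hkn : (k : ℕ) < n := k.isLt
    constructor
    · -- jk case
      intro hjk
      have hQ : ∀ t : Fin n → ℝ, ∀ s p : ℝ,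
          ‖(((List.range (j:ℕ)).map fun l => U l (fext t l) * V l).prod) *
            (U (j:ℕ) (fext t (j:ℕ) - s) * V (j:ℕ) * U ((j:ℕ)+1) s * V ((j:ℕ)+1)) *
            (((List.range ((k:ℕ) - 1 - (j:ℕ))).map fun m =>
              U ((j:ℕ)+2+m) (fext t ((j:ℕ)+1+m)) * V ((j:ℕ)+2+m)).prod) *
            (U ((k:ℕ)+1) (fext t (k:ℕ) - p) * V ((k:ℕ)+1) * U ((k:ℕ)+2) p) *
            (((List.range (n - 1 - (k:ℕ))).map fun m =>
              V ((k:ℕ)+2+m) * U ((k:ℕ)+3+m) (fext t ((k:ℕ)+1+m))).prod)‖ ≤ C := by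
        intro t s p
        have h_head : ‖((List.range (j:ℕ)).map fun l => U l (fext t l) * V l).prod‖ ≤
            ∏ l ∈ Finset.range (j:ℕ), ‖V l‖ := by
          rw [← listprod_range_eq]
          apply norm_prod_map_le
          intro l hl
          have hl' := List.mem_range.mp hl
          calc ‖U l (fext t l) * V l‖ ≤ ‖U l (fext t l)‖ * ‖V l‖ := norm_mul_le _ _
          _ ≤ 1 * ‖V l‖ := by gcongr; exact (hU l (by omega)).norm_le _
          _ = ‖V l‖ := one_mul _
        have h_mid1 : ‖U (j:ℕ) (fext t (j:ℕ) - s) * V (j:ℕ) * U ((j:ℕ)+1) s * V ((j:ℕ)+1)‖ ≤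
            ‖V (j:ℕ)‖ * ‖V ((j:ℕ)+1)‖ :=
          norm_AVBW_le ((hU _ (by omega)).norm_le _) ((hU _ (by omega)).norm_le _)
        have h_mlist : ‖((List.range ((k:ℕ) - 1 - (j:ℕ))).map fun m =>
            U ((j:ℕ)+2+m) (fext t ((j:ℕ)+1+m)) * V ((j:ℕ)+2+m)).prod‖ ≤
            ∏ m ∈ Finset.range ((k:ℕ) - 1 - (j:ℕ)), ‖V ((j:ℕ)+2+m)‖ := by
          rw [← listprod_range_eq]
          apply norm_prod_map_le
          intro m hm
          have hm' := List.mem_range.mp hm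
          calc ‖U ((j:ℕ)+2+m) (fext t ((j:ℕ)+1+m)) * V ((j:ℕ)+2+m)‖
              ≤ ‖U ((j:ℕ)+2+m) (fext t ((j:ℕ)+1+m))‖ * ‖V ((j:ℕ)+2+m)‖ := norm_mul_le _ _
          _ ≤ 1 * ‖V ((j:ℕ)+2+m)‖ := by gcongr; exact (hU _ (by omega)).norm_le _
          _ = ‖V ((j:ℕ)+2+m)‖ := one_mul _
        have h_mid2 : ‖U ((k:ℕ)+1) (fext t (k:ℕ) - p) * V ((k:ℕ)+1) * U ((k:ℕ)+2) p‖ ≤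
            ‖V ((k:ℕ)+1)‖ :=
          norm_AVB_le ((hU _ (by omega)).norm_le _) ((hU _ (by omega)).norm_le _)
        have h_tail : ‖((List.range (n - 1 - (k:ℕ))).map fun m =>
            V ((k:ℕ)+2+m) * U ((k:ℕ)+3+m) (fext t ((k:ℕ)+1+m))).prod‖ ≤
            ∏ m ∈ Finset.range (n - 1 - (k:ℕ)), ‖V ((k:ℕ)+1+1+m)‖ := by
          rw [← listprod_range_eq]
          apply norm_prod_map_le
          intro m hm
          have hm' := List.mem_range.mp hm
          have hidx : (k:ℕ)+1+1+m = (k:ℕ)+2+m := by omega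
          rw [hidx]
          calc ‖V ((k:ℕ)+2+m) * U ((k:ℕ)+3+m) (fext t ((k:ℕ)+1+m))‖
              ≤ ‖V ((k:ℕ)+2+m)‖ * ‖U ((k:ℕ)+3+m) (fext t ((k:ℕ)+1+m))‖ := norm_mul_le _ _
          _ ≤ ‖V ((k:ℕ)+2+m)‖ * 1 := by gcongr; exact (hU _ (by omega)).norm_le _
          _ = ‖V ((k:ℕ)+2+m)‖ := mul_one _
        refine le_trans (norm_mul_le _ _) ?_
        refine le_trans (mul_le_mul_of_nonneg_right (norm_mul_le _ _) (norm_nonneg _)) ?_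
        refine le_trans (mul_le_mul_of_nonneg_right
          (mul_le_mul_of_nonneg_right (norm_mul_le _ _) (norm_nonneg _)) (norm_nonneg _)) ?_
        refine le_trans (mul_le_mul_of_nonneg_right (mul_le_mul_of_nonneg_right
          (mul_le_mul_of_nonneg_right (norm_mul_le _ _) (norm_nonneg _)) (norm_nonneg _))
          (norm_nonneg _)) ?_
        rw [hCdef, prod_split5 (fun l => ‖V l‖) (a' := (k:ℕ)+1)
          (show n + 1 = (j:ℕ) + 2 + ((k:ℕ) - 1 - (j:ℕ)) + 1 + (n - 1 - (k:ℕ)) by omega)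
          (show (k:ℕ) + 1 = (j:ℕ) + 2 + ((k:ℕ) - 1 - (j:ℕ)) by omega)]
        gcongr <;>
          first | exact h_head | exact h_mid1 | exact h_mlist | exact h_mid2 | exact h_tail
      have houter : ∀ t : Fin n → ℝ,
          ‖ft f t • ∫ s in (0:ℝ)..(fext t (j:ℕ)), ∫ p in (0:ℝ)..(fext t (k:ℕ)),
            (((List.range (j:ℕ)).map fun l => U l (fext t l) * V l).prod) *
            (U (j:ℕ) (fext t (j:ℕ) - s) * V (j:ℕ) * U ((j:ℕ)+1) s * V ((j:ℕ)+1)) *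
            (((List.range ((k:ℕ) - 1 - (j:ℕ))).map fun m =>
              U ((j:ℕ)+2+m) (fext t ((j:ℕ)+1+m)) * V ((j:ℕ)+2+m)).prod) *
            (U ((k:ℕ)+1) (fext t (k:ℕ) - p) * V ((k:ℕ)+1) * U ((k:ℕ)+2) p) *
            (((List.range (n - 1 - (k:ℕ))).map fun m =>
              V ((k:ℕ)+2+m) * U ((k:ℕ)+3+m) (fext t ((k:ℕ)+1+m))).prod)‖ ≤
            ‖ft (pd k (pd j f)) t‖ * C := by
        intro t
        rw [norm_smul]
        have hout : ‖∫ s in (0:ℝ)..(fext t (j:ℕ)), ∫ p in (0:ℝ)..(fext t (k:ℕ)),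
            (((List.range (j:ℕ)).map fun l => U l (fext t l) * V l).prod) *
            (U (j:ℕ) (fext t (j:ℕ) - s) * V (j:ℕ) * U ((j:ℕ)+1) s * V ((j:ℕ)+1)) *
            (((List.range ((k:ℕ) - 1 - (j:ℕ))).map fun m =>
              U ((j:ℕ)+2+m) (fext t ((j:ℕ)+1+m)) * V ((j:ℕ)+2+m)).prod) *
            (U ((k:ℕ)+1) (fext t (k:ℕ) - p) * V ((k:ℕ)+1) * U ((k:ℕ)+2) p) *
            (((List.range (n - 1 - (k:ℕ))).map fun m =>
              V ((k:ℕ)+2+m) * U ((k:ℕ)+3+m) (fext t ((k:ℕ)+1+m))).prod)‖ ≤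
            (C * |fext t (k:ℕ) - 0|) * |fext t (j:ℕ) - 0| :=
          intervalIntegral.norm_integral_le_of_norm_le_const fun s _ =>
            intervalIntegral.norm_integral_le_of_norm_le_const fun p _ => hQ t s p
        refine le_trans (mul_le_mul_of_nonneg_left hout (norm_nonneg _)) (le_of_eq ?_)
        rw [sub_zero, sub_zero, fext_coe, fext_coe,
          norm_ft_pd (contDiff_pd hc2 j) (h1 j).1 (fun l => (h2 j l).1) k t,
          norm_ft_pd hc1 hfi hdj j t]
        ring
      calc ‖moi2jk n f U V (j:ℕ) (k:ℕ)‖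
          = c * ‖∫ t : Fin n → ℝ, ft f t •
              ∫ s in (0:ℝ)..(fext t (j:ℕ)), ∫ p in (0:ℝ)..(fext t (k:ℕ)),
              (((List.range (j:ℕ)).map fun l => U l (fext t l) * V l).prod) *
              (U (j:ℕ) (fext t (j:ℕ) - s) * V (j:ℕ) * U ((j:ℕ)+1) s * V ((j:ℕ)+1)) *
              (((List.range ((k:ℕ) - 1 - (j:ℕ))).map fun m =>
                U ((j:ℕ)+2+m) (fext t ((j:ℕ)+1+m)) * V ((j:ℕ)+2+m)).prod) *
              (U ((k:ℕ)+1) (fext t (k:ℕ) - p) * V ((k:ℕ)+1) * U ((k:ℕ)+2) p) *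
              (((List.range (n - 1 - (k:ℕ))).map fun m =>
                V ((k:ℕ)+2+m) * U ((k:ℕ)+3+m) (fext t ((k:ℕ)+1+m))).prod)‖ := by
            have hsc : ‖(-((c : ℝ) : ℂ))‖ = c := by
              rw [norm_neg, Complex.norm_real, Real.norm_eq_abs,
                _root_.abs_of_nonneg hcpos.le]
            rw [moi2jk, norm_smul, ← hcdef, hsc]
      _ ≤ c * ∫ t : Fin n → ℝ, ‖ft f t •
              ∫ s in (0:ℝ)..(fext t (j:ℕ)), ∫ p in (0:ℝ)..(fext t (k:ℕ)),
              (((List.range (j:ℕ)).map fun l => U l (fext t l) * V l).prod) *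
              (U (j:ℕ) (fext t (j:ℕ) - s) * V (j:ℕ) * U ((j:ℕ)+1) s * V ((j:ℕ)+1)) *
              (((List.range ((k:ℕ) - 1 - (j:ℕ))).map fun m =>
                U ((j:ℕ)+2+m) (fext t ((j:ℕ)+1+m)) * V ((j:ℕ)+2+m)).prod) *
              (U ((k:ℕ)+1) (fext t (k:ℕ) - p) * V ((k:ℕ)+1) * U ((k:ℕ)+2) p) *
              (((List.range (n - 1 - (k:ℕ))).map fun m =>
                V ((k:ℕ)+2+m) * U ((k:ℕ)+3+m) (fext t ((k:ℕ)+1+m))).prod)‖ :=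
            mul_le_mul_of_nonneg_left (norm_integral_le_integral_norm _) hcpos.le
      _ ≤ c * ∫ t : Fin n → ℝ, ‖ft (pd k (pd j f)) t‖ * C := by
            apply mul_le_mul_of_nonneg_left ?_ hcpos.le
            exact integral_mono_of_nonneg (Filter.Eventually.of_forall fun t => norm_nonneg _)
              (((h2 j k).2).norm.mul_const C) (Filter.Eventually.of_forall houter)
      _ = c * (∫ t : Fin n → ℝ, ‖ft (pd k (pd j f)) t‖) * C := by
            rw [integral_mul_const, mul_assoc]
    · -- same-index case
      have hQ : ∀ t : Fin n → ℝ, ∀ s p : ℝ,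
          ‖(((List.range (j:ℕ)).map fun l => U l (fext t l) * V l).prod) *
            (U (j:ℕ) (fext t (j:ℕ) - s) * V (j:ℕ) * U ((j:ℕ)+1) (s - p) * V ((j:ℕ)+1) *
              U ((j:ℕ)+2) p) *
            (((List.range (n - 1 - (j:ℕ))).map fun m =>
              V ((j:ℕ)+2+m) * U ((j:ℕ)+3+m) (fext t ((j:ℕ)+1+m))).prod)‖ ≤ C := by
        intro t s p
        have h_head : ‖((List.range (j:ℕ)).map fun l => U l (fext t l) * V l).prod‖ ≤
            ∏ l ∈ Finset.range (j:ℕ), ‖V l‖ := by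
          rw [← listprod_range_eq]
          apply norm_prod_map_le
          intro l hl
          have hl' := List.mem_range.mp hl
          calc ‖U l (fext t l) * V l‖ ≤ ‖U l (fext t l)‖ * ‖V l‖ := norm_mul_le _ _
          _ ≤ 1 * ‖V l‖ := by gcongr; exact (hU l (by omega)).norm_le _
          _ = ‖V l‖ := one_mul _
        have h_mid : ‖U (j:ℕ) (fext t (j:ℕ) - s) * V (j:ℕ) * U ((j:ℕ)+1) (s - p) *
            V ((j:ℕ)+1) * U ((j:ℕ)+2) p‖ ≤ ‖V (j:ℕ)‖ * ‖V ((j:ℕ)+1)‖ :=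
          norm_AVBWC_le ((hU _ (by omega)).norm_le _) ((hU _ (by omega)).norm_le _)
            ((hU _ (by omega)).norm_le _)
        have h_tail : ‖((List.range (n - 1 - (j:ℕ))).map fun m =>
            V ((j:ℕ)+2+m) * U ((j:ℕ)+3+m) (fext t ((j:ℕ)+1+m))).prod‖ ≤
            ∏ m ∈ Finset.range (n - 1 - (j:ℕ)), ‖V ((j:ℕ)+2+m)‖ := by
          rw [← listprod_range_eq]
          apply norm_prod_map_le
          intro m hm
          have hm' := List.mem_range.mp hm
          calc ‖V ((j:ℕ)+2+m) * U ((j:ℕ)+3+m) (fext t ((j:ℕ)+1+m))‖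
              ≤ ‖V ((j:ℕ)+2+m)‖ * ‖U ((j:ℕ)+3+m) (fext t ((j:ℕ)+1+m))‖ := norm_mul_le _ _
          _ ≤ ‖V ((j:ℕ)+2+m)‖ * 1 := by gcongr; exact (hU _ (by omega)).norm_le _
          _ = ‖V ((j:ℕ)+2+m)‖ := mul_one _
        refine le_trans norm_mul₃_le ?_
        rw [hCdef, prod_split4 (fun l => ‖V l‖)
          (show n + 1 = (j:ℕ) + 2 + (n - 1 - (j:ℕ)) by omega)]
        gcongr <;> first | exact h_head | exact h_mid | exact h_tail
      have houter : ∀ t : Fin n → ℝ,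
          ‖ft f t • ∫ s in (0:ℝ)..(fext t (j:ℕ)), ∫ p in (0:ℝ)..s,
            (((List.range (j:ℕ)).map fun l => U l (fext t l) * V l).prod) *
            (U (j:ℕ) (fext t (j:ℕ) - s) * V (j:ℕ) * U ((j:ℕ)+1) (s - p) * V ((j:ℕ)+1) *
              U ((j:ℕ)+2) p) *
            (((List.range (n - 1 - (j:ℕ))).map fun m =>
              V ((j:ℕ)+2+m) * U ((j:ℕ)+3+m) (fext t ((j:ℕ)+1+m))).prod)‖ ≤
            (1/2) * ‖ft (pd j (pd j f)) t‖ * C := by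
        intro t
        rw [norm_smul]
        have hin : ∀ s : ℝ, ‖∫ p in (0:ℝ)..s,
            (((List.range (j:ℕ)).map fun l => U l (fext t l) * V l).prod) *
            (U (j:ℕ) (fext t (j:ℕ) - s) * V (j:ℕ) * U ((j:ℕ)+1) (s - p) * V ((j:ℕ)+1) *
              U ((j:ℕ)+2) p) *
            (((List.range (n - 1 - (j:ℕ))).map fun m =>
              V ((j:ℕ)+2+m) * U ((j:ℕ)+3+m) (fext t ((j:ℕ)+1+m))).prod)‖ ≤ C * |s| := by
          intro s
          have := intervalIntegral.norm_integral_le_of_norm_le_const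
            (C := C) (a := (0:ℝ)) (b := s) fun p _ => hQ t s p
          rwa [sub_zero] at this
        have hout := norm_intervalIntegral_le_sq _ (fext t (j:ℕ)) C hin
        have habs2 : (fext t (j:ℕ)) ^ 2 = |t j| * |t j| := by
          rw [fext_coe, abs_mul_abs_self]; ring
        refine le_trans (mul_le_mul_of_nonneg_left hout (norm_nonneg _)) (le_of_eq ?_)
        rw [habs2, norm_ft_pd (contDiff_pd hc2 j) (h1 j).1 (fun l => (h2 j l).1) j t,
          norm_ft_pd hc1 hfi hdj j t]
        ring
      calc ‖moi2same n f U V (j:ℕ)‖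
          = c * ‖∫ t : Fin n → ℝ, ft f t •
              ∫ s in (0:ℝ)..(fext t (j:ℕ)), ∫ p in (0:ℝ)..s,
              (((List.range (j:ℕ)).map fun l => U l (fext t l) * V l).prod) *
              (U (j:ℕ) (fext t (j:ℕ) - s) * V (j:ℕ) * U ((j:ℕ)+1) (s - p) * V ((j:ℕ)+1) *
                U ((j:ℕ)+2) p) *
              (((List.range (n - 1 - (j:ℕ))).map fun m =>
                V ((j:ℕ)+2+m) * U ((j:ℕ)+3+m) (fext t ((j:ℕ)+1+m))).prod)‖ := by
            have hsc : ‖(-((c : ℝ) : ℂ))‖ = c := by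
              rw [norm_neg, Complex.norm_real, Real.norm_eq_abs,
                _root_.abs_of_nonneg hcpos.le]
            rw [moi2same, norm_smul, ← hcdef, hsc]
      _ ≤ c * ∫ t : Fin n → ℝ, ‖ft f t •
              ∫ s in (0:ℝ)..(fext t (j:ℕ)), ∫ p in (0:ℝ)..s,
              (((List.range (j:ℕ)).map fun l => U l (fext t l) * V l).prod) *
              (U (j:ℕ) (fext t (j:ℕ) - s) * V (j:ℕ) * U ((j:ℕ)+1) (s - p) * V ((j:ℕ)+1) *
                U ((j:ℕ)+2) p) *
              (((List.range (n - 1 - (j:ℕ))).map fun m =>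
                V ((j:ℕ)+2+m) * U ((j:ℕ)+3+m) (fext t ((j:ℕ)+1+m))).prod)‖ :=
            mul_le_mul_of_nonneg_left (norm_integral_le_integral_norm _) hcpos.le
      _ ≤ c * ∫ t : Fin n → ℝ, (1/2) * ‖ft (pd j (pd j f)) t‖ * C := by
            apply mul_le_mul_of_nonneg_left ?_ hcpos.le
            apply integral_mono_of_nonneg (Filter.Eventually.of_forall fun t => norm_nonneg _)
              ?_ (Filter.Eventually.of_forall houter)
            exact (((h2 j j).2).norm.const_mul (1/2)).mul_const C
      _ = (1/2) * c * (∫ t : Fin n → ℝ, ‖ft (pd j (pd j f)) t‖) * C := by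
            rw [integral_mul_const, integral_const_mul]
            ring


end
end
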